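/- Let R be a regular local ring containing a field of characteristic zero, and let ν be a rank 1 valuation of the quotient field of R which is nonnegative on R. If z₁, z₂, … is an infinite sequence of elements of R with ν(z₁) < ν(z₂) < ⋯ strictly increasing, then ν(zₙ) → ∞; equivalently, for every real number ρ only finitely many values assumed by ν on R are ≤ ρ. -/

import Mathlib

open scoped NNReal
open Filter

/-- Quotient of a Noetherian ring by a power of a maximal ideal is an Artinian module. -/
lemma artinian_quotient_pow {A : Type*} [CommRing A] [IsNoetherianRing A]
    (q : Ideal A) (hq : q.IsMaximal) (n : ℕ) :
    IsArtinian A (A ⧸ (q ^ n : Ideal A)) := by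
  induction n with
  | zero =>
      have : Subsingleton (A ⧸ (q ^ 0 : Ideal A)) := by
        rw [pow_zero]
        exact Ideal.Quotient.subsingleton_iff.mpr Ideal.one_eq_top
      infer_instance
  | succ n ih =>
      set I : Ideal A := q ^ n with hI
      set J : Ideal A := q ^ (n + 1) with hJ
      have hJI : J ≤ I := Ideal.pow_le_pow_right (Nat.le_succ n)
      -- the projection
      let g : (A ⧸ J) →ₗ[A] (A ⧸ I) :=
        Submodule.mapQ (J : Submodule A A) (I : Submodule A A) LinearMap.id hJI
      have hg : Function.Surjective g := by
        intro x
        obtain ⟨a, rfl⟩ := Submodule.Quotient.mk_surjective _ x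
        exact ⟨Submodule.Quotient.mk a, rfl⟩
      -- the kernel is killed by q
      have hker : Module.IsTorsionBySet A (LinearMap.ker g) (q : Set A) := by
        rintro ⟨x, hx⟩ ⟨r, hr⟩
        obtain ⟨a, rfl⟩ := Submodule.Quotient.mk_surjective _ x
        have ha : a ∈ I := by
          have : g (Submodule.Quotient.mk a) = 0 := hx
          rwa [Submodule.mapQ_apply, LinearMap.id_apply,
            Submodule.Quotient.mk_eq_zero] at this
        apply Subtype.ext
        show r • (Submodule.Quotient.mk a : A ⧸ J) = 0
        rw [← Submodule.Quotient.mk_smul, Submodule.Quotient.mk_eq_zero]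
        have : r • a ∈ q * I := Ideal.mul_mem_mul hr ha
        show r • a ∈ q ^ (n + 1)
        rw [pow_succ, mul_comm]
        exact this
      letI : Module (A ⧸ q) (LinearMap.ker g) := hker.module
      haveI : IsScalarTower A (A ⧸ q) (LinearMap.ker g) := hker.isScalarTower
      letI : Field (A ⧸ q) := Ideal.Quotient.field q
      haveI : Module.Finite A (LinearMap.ker g) := by
        have : (LinearMap.ker g).FG := IsNoetherian.noetherian _
        exact Module.Finite.iff_fg.mpr this
      haveI : Module.Finite (A ⧸ q) (LinearMap.ker g) :=
        Module.Finite.of_restrictScalars_finite A (A ⧸ q) (LinearMap.ker g)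
      have hart : IsArtinian (A ⧸ q) (LinearMap.ker g) := isArtinian_of_fg_of_artinian'
      haveI : IsArtinian A (LinearMap.ker g) := by
        let F : Submodule A (LinearMap.ker g) → Submodule (A ⧸ q) (LinearMap.ker g) :=
          fun N =>
            { carrier := N
              add_mem' := fun ha hb => N.add_mem ha hb
              zero_mem' := N.zero_mem
              smul_mem' := by
                intro c x hx
                obtain ⟨a, rfl⟩ := Ideal.Quotient.mk_surjective c
                have : (Ideal.Quotient.mk q a) • x = a • x := by
                  rw [← algebraMap_smul (A ⧸ q) a x]; rfl
                rw [this]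
                exact N.smul_mem a hx }
        have hF : StrictMono F := by
          intro N N' h
          refine lt_of_le_of_ne (fun x hx => h.le hx) (fun he => h.ne ?_)
          have h2 := congrArg
            (fun X : Submodule (A ⧸ q) (LinearMap.ker g) => (X : Set (LinearMap.ker g))) he
          exact SetLike.ext' h2
        exact hF.wellFoundedLT
      exact isArtinian_of_range_eq_ker (LinearMap.ker g).subtype g
        (Submodule.range_subtype _)

/-- An ideal cut out by a valuation bound. -/
def valIdeal {A : Type*} [CommRing A] (w : Valuation A ℝ≥0) (hw1 : ∀ a, w a ≤ 1)
    (c : ℝ≥0) : Ideal A where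
  carrier := {a | w a ≤ c}
  add_mem' := fun ha hb => le_trans (w.map_add _ _) (max_le ha hb)
  zero_mem' := by simp
  smul_mem' := by
    intro r a ha
    have : w (r * a) = w r * w a := w.map_mul r a
    simp only [smul_eq_mul, Set.mem_setOf_eq, this]
    calc w r * w a ≤ 1 * c := mul_le_mul' (hw1 r) ha
    _ = c := one_mul c

lemma mem_valIdeal_iff {A : Type*} [CommRing A] {w : Valuation A ℝ≥0} {hw1 : ∀ a, w a ≤ 1}
    {c : ℝ≥0} {a : A} : a ∈ valIdeal w hw1 c ↔ w a ≤ c := Iff.rfl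

lemma val_le_of_mem_span {A : Type*} [CommRing A] (w : Valuation A ℝ≥0)
    (hw1 : ∀ a, w a ≤ 1) {S : Set A} {θ : ℝ≥0} (hS : ∀ s ∈ S, w s ≤ θ)
    {z : A} (hz : z ∈ Ideal.span S) : w z ≤ θ := by
  have : Ideal.span S ≤ valIdeal w hw1 θ := Ideal.span_le.mpr hS
  exact this hz

lemma val_le_of_mem_span_pow {A : Type*} [CommRing A] (w : Valuation A ℝ≥0)
    (hw1 : ∀ a, w a ≤ 1) {S : Set A} {θ : ℝ≥0} (hS : ∀ s ∈ S, w s ≤ θ) :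
    ∀ (n : ℕ) {z : A}, z ∈ (Ideal.span S) ^ n → w z ≤ θ ^ n := by
  intro n
  induction n with
  | zero => intro z _; simpa using hw1 z
  | succ n ih =>
      intro z hz
      rw [pow_succ] at hz
      rw [pow_succ]
      refine Submodule.mul_induction_on hz ?_ ?_
      · intro a ha b hb
        have : w (a * b) = w a * w b := w.map_mul a b
        rw [this]
        exact mul_le_mul' (ih ha) (val_le_of_mem_span w hw1 hS hb)
      · intro x y hx hy
        exact le_trans (w.map_add x y) (max_le hx hy)

/-- No strictly increasing sequence of values of a valuation `≤ 1` on a Noetherian ring. -/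
lemma no_strictMono_val {R : Type*} [CommRing R] [IsNoetherianRing R]
    (w : Valuation R ℝ≥0) (hw1 : ∀ r, w r ≤ 1)
    (z : ℕ → R) (hmono : StrictMono fun n => w (z n)) : False := by
  set J : ℕ → Ideal R := fun n => valIdeal w hw1 (w (z n)) with hJ
  have hlt : ∀ n, J n < J (n + 1) := by
    intro n
    refine lt_of_le_of_ne ?_ ?_
    · intro a ha
      exact le_trans ha (hmono (Nat.lt_succ_self n)).le
    · intro he
      have h1 : z (n + 1) ∈ J (n + 1) := mem_valIdeal_iff.mpr le_rfl
      rw [← he] at h1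
      exact absurd h1 (not_le.mpr (hmono (Nat.lt_succ_self n)))
  have e : ((· > ·) : ℕ → ℕ → Prop) ↪r ((· > ·) : Ideal R → Ideal R → Prop) :=
    RelEmbedding.natGT J hlt
  exact e.not_wellFounded (inferInstance : WellFoundedGT (Ideal R)).wf

/-- No strictly decreasing sequence of values bounded below by `ρ > 0`. -/
lemma no_strictAnti_val {R : Type*} [CommRing R] [IsDomain R] [IsNoetherianRing R]
    (v : Valuation (FractionRing R) ℝ≥0)
    (hnonneg : ∀ r : R, v (algebraMap R (FractionRing R) r) ≤ 1)
    {ρ : ℝ≥0} (hρ : 0 < ρ) (z : ℕ → R)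
    (hanti : StrictAnti fun n => v (algebraMap R (FractionRing R) (z n)))
    (hge : ∀ n, ρ ≤ v (algebraMap R (FractionRing R) (z n))) : False := by
  set f := algebraMap R (FractionRing R) with hf
  set c : ℕ → ℝ≥0 := fun n => v (f (z n)) with hc
  -- the center prime ideal
  let p : Ideal R :=
    { carrier := {r | v (f r) < 1}
      add_mem' := by
        intro a b ha hb
        simp only [Set.mem_setOf_eq, map_add]
        exact lt_of_le_of_lt (v.map_add _ _) (max_lt ha hb)
      zero_mem' := by simp
      smul_mem' := by
        intro r a ha
        simp only [smul_eq_mul, Set.mem_setOf_eq, map_mul]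
        calc v (f r) * v (f a) ≤ 1 * v (f a) := mul_le_mul' (hnonneg r) le_rfl
        _ = v (f a) := one_mul _
        _ < 1 := ha }
  have hmemp : ∀ r : R, r ∈ p ↔ v (f r) < 1 := fun r => Iff.rfl
  haveI hp : p.IsPrime := by
    constructor
    · intro htop
      have h1 : (1 : R) ∈ p := htop ▸ Submodule.mem_top
      rw [hmemp] at h1
      simp at h1
    · intro a b hab
      rw [hmemp] at hab ⊢
      rw [hmemp]
      by_contra hcon
      push_neg at hcon
      obtain ⟨ha, hb⟩ := hcon
      have ha' : v (f a) = 1 := le_antisymm (hnonneg a) ha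
      have hb' : v (f b) = 1 := le_antisymm (hnonneg b) hb
      rw [map_mul, map_mul, ha', hb'] at hab
      simp at hab
  set A := Localization.AtPrime p with hA
  have hle : p.primeCompl ≤ nonZeroDivisors R := by
    intro s hs
    have h0p : (0 : R) ∈ p := by
      have : v (f 0) < 1 := by simp
      exact this
    have hs0 : s ≠ 0 := by
      intro h
      exact hs (h ▸ h0p)
    exact mem_nonZeroDivisors_of_ne_zero hs0
  haveI : IsDomain A := IsLocalization.isDomain_localization hle
  haveI : IsNoetherianRing A := IsLocalization.isNoetherianRing p.primeCompl A ‹IsNoetherianRing R›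
  have hu : ∀ y : p.primeCompl, IsUnit (f y) := by
    intro y
    rw [isUnit_iff_ne_zero]
    intro h0
    have h0p : (0 : R) ∈ p := by
      have : v (f 0) < 1 := by simp
      exact this
    have : (y : R) = 0 := IsFractionRing.injective R (FractionRing R)
      (by rw [map_zero]; exact h0)
    exact y.2 (this ▸ h0p)
  let g : A →+* FractionRing R := IsLocalization.lift hu
  let w : Valuation A ℝ≥0 := v.comap g
  have hwf : ∀ r : R, w (algebraMap R A r) = v (f r) := by
    intro r
    show v (g (algebraMap R A r)) = v (f r)
    rw [IsLocalization.lift_eq]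
  have hw1 : ∀ a : A, w a ≤ 1 := by
    intro a
    obtain ⟨⟨x, s⟩, rfl⟩ := IsLocalization.mk'_surjective p.primeCompl a
    show w (IsLocalization.mk' A x s) ≤ 1
    have hs1 : v (f s) = 1 := by
      have hns : ¬ v (f (s : R)) < 1 := s.2
      exact le_antisymm (hnonneg s) (not_lt.mp hns)
    have hspec := IsLocalization.mk'_spec A x s
    have h2 : w (IsLocalization.mk' A x s) * w (algebraMap R A (s : R)) =
        w (algebraMap R A x) := by rw [← w.map_mul, hspec]
    rw [hwf, hwf, hs1, mul_one] at h2
    rw [h2]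
    exact hnonneg x
  -- the maximal ideal of the localization
  set q : Ideal A := Ideal.map (algebraMap R A) p with hq
  haveI hqmax : q.IsMaximal := by
    rw [hq, Localization.AtPrime.map_eq_maximalIdeal]
    exact IsLocalRing.maximalIdeal.isMaximal _
  obtain ⟨T, hT⟩ : p.FG := IsNoetherian.noetherian p
  set θ : ℝ≥0 := T.sup fun t => v (f t) with hθ
  have hθ1 : θ < 1 := by
    rw [hθ, Finset.sup_lt_iff (by simpa using zero_lt_one)]
    intro t ht
    have : t ∈ p := hT ▸ Submodule.subset_span ht
    exact this
  have hqspan : q = Ideal.span ((algebraMap R A) '' (T : Set R)) := by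
    rw [hq, ← Ideal.map_span]
    exact congrArg (Ideal.map (algebraMap R A)) hT.symm
  have hSθ : ∀ a ∈ (algebraMap R A) '' (T : Set R), w a ≤ θ := by
    rintro _ ⟨t, ht, rfl⟩
    rw [hwf]
    exact Finset.le_sup (f := fun t => v (f t)) ht
  obtain ⟨n, hn⟩ : ∃ n : ℕ, θ ^ n < ρ := exists_pow_lt_of_lt_one hρ hθ1
  have hpow : ∀ a ∈ q ^ n, w a ≤ θ ^ n := by
    intro a ha
    rw [hqspan] at ha
    exact val_le_of_mem_span_pow w hw1 hSθ n ha
  haveI hart : IsArtinian A (A ⧸ (q ^ n : Ideal A)) := artinian_quotient_pow q hqmax n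
  -- the strictly decreasing chain of submodules
  set mk := (q ^ n : Ideal A).mkQ with hmk
  set N : ℕ → Submodule A (A ⧸ (q ^ n : Ideal A)) :=
    fun i => Submodule.map mk (valIdeal w hw1 (c i) : Submodule A A) with hN
  have hwa : ∀ i, w (algebraMap R A (z i)) = c i := fun i => hwf (z i)
  have hlt : ∀ i, N (i + 1) < N i := by
    intro i
    have hci : c (i + 1) < c i := hanti (Nat.lt_succ_self i)
    refine lt_of_le_of_ne ?_ ?_
    · refine Submodule.map_mono ?_
      intro x hx
      exact le_trans hx hci.le
    · intro he
      have hmem : mk (algebraMap R A (z i)) ∈ N i :=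
        Submodule.mem_map_of_mem ((hwa i).le)
      rw [← he] at hmem
      obtain ⟨b, hb, heq⟩ := hmem
      have hsub : b - algebraMap R A (z i) ∈ (q ^ n : Ideal A) :=
        (Submodule.Quotient.eq _).mp heq
      have key : w (algebraMap R A (z i)) ≤ c (i + 1) := by
        have : algebraMap R A (z i) = b - (b - algebraMap R A (z i)) := by ring
        rw [this]
        refine le_trans (w.map_sub _ _) (max_le hb ?_)
        exact le_trans (hpow _ hsub) (le_trans hn.le (hge (i + 1)))
      rw [hwa i] at key
      exact absurd (lt_of_le_of_lt key hci) (lt_irrefl _)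
  have e : ((· > ·) : ℕ → ℕ → Prop) ↪r
      ((· < ·) : Submodule A (A ⧸ (q ^ n : Ideal A)) → _ → Prop) :=
    RelEmbedding.natGT N hlt
  exact e.not_wellFounded hart.wf

/-- Let `R` be a regular local ring containing a field of characteristic
zero, and let `ν` be a rank 1 valuation of the quotient field of `R` which is nonnegative
on `R` (we use the equivalent multiplicative formulation with a valuation `v` taking
values in `ℝ≥0`, so that `ν = -log v`; `ν` nonnegative means `v ≤ 1`, and additive values
increasing to `∞` means multiplicative values decreasing to `0`).  If `z₁, z₂, …` is an
infinite sequence of elements of `R` with strictly increasing values `ν(zₙ)`, then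
`ν(zₙ) → ∞`; equivalently, for every `ρ` only finitely many values assumed by `ν` on
`R \ {0}` are `≤ ρ`. -/
theorem stmt_1 (R : Type*) [CommRing R] [IsLocalRing R] [IsDomain R] [IsNoetherianRing R]
    (k : Type*) [Field k] [CharZero k] [Algebra k R]
    (hreg : ∃ s : Finset R, Ideal.span (s : Set R) = IsLocalRing.maximalIdeal R ∧
      (s.card : WithBot ℕ∞) = ringKrullDim R)
    (v : Valuation (FractionRing R) ℝ≥0)
    (hrank1 : ∃ x : FractionRing R, v x ≠ 0 ∧ v x ≠ 1)
    (hnonneg : ∀ r : R, v (algebraMap R (FractionRing R) r) ≤ 1) :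
    (∀ z : ℕ → R, (∀ n, z n ≠ 0) →
        StrictAnti (fun n => v (algebraMap R (FractionRing R) (z n))) →
        Tendsto (fun n => v (algebraMap R (FractionRing R) (z n))) atTop (nhds 0)) ∧
      ∀ ρ : ℝ≥0, 0 < ρ →
        {c : ℝ≥0 | ρ ≤ c ∧ ∃ z : R, z ≠ 0 ∧ v (algebraMap R (FractionRing R) z) = c}.Finite := by

  constructor
  · intro z hz hanti
    have ht := tendsto_atTop_ciInf hanti.antitone (OrderBot.bddBelow _)
    suffices h0 : (⨅ n, v (algebraMap R (FractionRing R) (z n))) = 0 by rwa [h0] at ht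
    by_contra h0
    have hpos : 0 < ⨅ n, v (algebraMap R (FractionRing R) (z n)) := pos_iff_ne_zero.mpr h0
    exact no_strictAnti_val v hnonneg hpos z hanti
      (fun n => ciInf_le (OrderBot.bddBelow _) n)
  · intro ρ hρ
    by_contra h
    have hinf : {c : ℝ≥0 | ρ ≤ c ∧
        ∃ z : R, z ≠ 0 ∧ v (algebraMap R (FractionRing R) z) = c}.Infinite := h
    set S := {c : ℝ≥0 | ρ ≤ c ∧
        ∃ z : R, z ≠ 0 ∧ v (algebraMap R (FractionRing R) z) = c} with hS
    by_cases hwf : S.IsWF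
    · -- extract a strictly increasing sequence of values
      have hpwo := hwf.isPWO
      set e := hinf.natEmbedding with he
      obtain ⟨gm, hg⟩ := hpwo.exists_monotone_subseq (f := fun n => (e n : ℝ≥0)) (fun n => (e n).2)
      have hmono : Monotone fun n => ((e (gm n) : ℝ≥0)) := fun m n hmn => hg hmn
      have hinj : Function.Injective fun n => ((e (gm n) : ℝ≥0)) := by
        intro a b hab
        exact gm.injective (e.injective (Subtype.ext hab))
      have hsm : StrictMono fun n => ((e (gm n) : ℝ≥0)) := hmono.strictMono_of_injective hinj
      choose zf hz0 hv using fun n => (e (gm n)).2.2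
      have hw1 : ∀ r : R, (v.comap (algebraMap R (FractionRing R))) r ≤ 1 := hnonneg
      refine no_strictMono_val (v.comap (algebraMap R (FractionRing R))) hw1 zf ?_
      have : (fun n => (v.comap (algebraMap R (FractionRing R))) (zf n)) =
          fun n => ((e (gm n) : ℝ≥0)) := funext fun n => hv n
      rw [this]
      exact hsm
    · rw [Set.isWF_iff_no_descending_seq] at hwf
      push_neg at hwf
      obtain ⟨sq, hanti, hmem⟩ := hwf
      choose zf hz0 hv using fun n => (hmem n).2
      refine no_strictAnti_val v hnonneg hρ zf ?_ ?_
      · have : (fun n => v (algebraMap R (FractionRing R) (zf n))) = fun n => sq n :=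
          funext fun n => hv n
        rw [this]
        exact hanti
      · intro n
        rw [hv n]
        exact (hmem n).1
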